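/- Let g : ℝ → ℝ be seven times differentiable (in particular C³). Define y(x) = g(x) + Σ_{k=1}^{8} β_k(x)·c_k, where c₁ = y_i − g(0), c₂ = y_f − g(1), c₃ = y′_i − g′(0), c₄ = y′_f − g′(1), c₅ = y″_i − g″(0), c₆ = y″_f − g″(1), c₇ = y‴_i − g‴(0), c₈ = y‴_f − g‴(1), and β₁,…,β₈ are the switching polynomials on [0,1] given by β₁(x)=20x⁷−70x⁶+84x⁵−35x⁴+1, β₂(x)=−20x⁷+70x⁶−84x⁵+35x⁴, β₃(x)=10x⁷−36x⁶+45x⁵−20x⁴+x, β₄(x)=10x⁷−34x⁶+39x⁵−15x⁴, β₅(x)=2x⁷−(15/2)x⁶+10x⁵−5x⁴+x²/2, β₆(x)=−2x⁷+(13/2)x⁶−7x⁵+(5/2)x⁴, β₇(x)=x⁷/6−2x⁶/3+x⁵−2x⁴/3+x³/6, β₈(x)=x⁷/6−x⁶/2+x⁵/2−x⁴/6. Then y(0) = y_i, y(1) = y_f, y′(0) = y′_i, y′(1) = y′_f, y″(0) = y″_i, y″(1) = y″_f, y‴(0) = y‴_i, and y‴(1) = y‴_f. -/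

import Mathlib

lemma tfc_poly7 (a0 a1 a2 a3 a4 a5 a6 a7 x : ℝ) :
    HasDerivAt (fun x : ℝ => a0 + a1*x + a2*x^2 + a3*x^3 + a4*x^4 + a5*x^5 + a6*x^6 + a7*x^7)
      (a1 + 2*a2*x + 3*a3*x^2 + 4*a4*x^3 + 5*a5*x^4 + 6*a6*x^5 + 7*a7*x^6) x := by
  have h := (((((((hasDerivAt_const x a0).add ((hasDerivAt_id x).const_mul a1)).add
    ((hasDerivAt_pow 2 x).const_mul a2)).add ((hasDerivAt_pow 3 x).const_mul a3)).add
    ((hasDerivAt_pow 4 x).const_mul a4)).add ((hasDerivAt_pow 5 x).const_mul a5)).add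
    ((hasDerivAt_pow 6 x).const_mul a6)).add ((hasDerivAt_pow 7 x).const_mul a7)
  convert h using 1
  · rfl
  · rfl
  · rfl
  push_cast
  ring

lemma tfc_poly6 (a0 a1 a2 a3 a4 a5 a6 x : ℝ) :
    HasDerivAt (fun x : ℝ => a0 + a1*x + a2*x^2 + a3*x^3 + a4*x^4 + a5*x^5 + a6*x^6)
      (a1 + 2*a2*x + 3*a3*x^2 + 4*a4*x^3 + 5*a5*x^4 + 6*a6*x^5) x := by
  have h := ((((((hasDerivAt_const x a0).add ((hasDerivAt_id x).const_mul a1)).add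
    ((hasDerivAt_pow 2 x).const_mul a2)).add ((hasDerivAt_pow 3 x).const_mul a3)).add
    ((hasDerivAt_pow 4 x).const_mul a4)).add ((hasDerivAt_pow 5 x).const_mul a5)).add
    ((hasDerivAt_pow 6 x).const_mul a6)
  convert h using 1
  · rfl
  · rfl
  · rfl
  push_cast
  ring

lemma tfc_poly5 (a0 a1 a2 a3 a4 a5 x : ℝ) :
    HasDerivAt (fun x : ℝ => a0 + a1*x + a2*x^2 + a3*x^3 + a4*x^4 + a5*x^5)
      (a1 + 2*a2*x + 3*a3*x^2 + 4*a4*x^3 + 5*a5*x^4) x := by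
  have h := (((((hasDerivAt_const x a0).add ((hasDerivAt_id x).const_mul a1)).add
    ((hasDerivAt_pow 2 x).const_mul a2)).add ((hasDerivAt_pow 3 x).const_mul a3)).add
    ((hasDerivAt_pow 4 x).const_mul a4)).add ((hasDerivAt_pow 5 x).const_mul a5)
  convert h using 1
  · rfl
  · rfl
  · rfl
  push_cast
  ring

theorem tfc_constrained_expression_satisfies_bvp_constraints
    (g : ℝ → ℝ) (hg : ContDiff ℝ 7 g)
    (yi yf yi' yf' yi'' yf'' yi''' yf''' : ℝ) :
    let β₁ : ℝ → ℝ := fun x => 20*x^7 - 70*x^6 + 84*x^5 - 35*x^4 + 1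
    let β₂ : ℝ → ℝ := fun x => -20*x^7 + 70*x^6 - 84*x^5 + 35*x^4
    let β₃ : ℝ → ℝ := fun x => 10*x^7 - 36*x^6 + 45*x^5 - 20*x^4 + x
    let β₄ : ℝ → ℝ := fun x => 10*x^7 - 34*x^6 + 39*x^5 - 15*x^4
    let β₅ : ℝ → ℝ := fun x => 2*x^7 - (15/2)*x^6 + 10*x^5 - 5*x^4 + x^2/2
    let β₆ : ℝ → ℝ := fun x => -2*x^7 + (13/2)*x^6 - 7*x^5 + (5/2)*x^4
    let β₇ : ℝ → ℝ := fun x => x^7/6 - 2*x^6/3 + x^5 - 2*x^4/3 + x^3/6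
    let β₈ : ℝ → ℝ := fun x => x^7/6 - x^6/2 + x^5/2 - x^4/6
    let y : ℝ → ℝ := fun x =>
      g x + β₁ x * (yi - g 0) + β₂ x * (yf - g 1)
          + β₃ x * (yi' - deriv g 0) + β₄ x * (yf' - deriv g 1)
          + β₅ x * (yi'' - iteratedDeriv 2 g 0) + β₆ x * (yf'' - iteratedDeriv 2 g 1)
          + β₇ x * (yi''' - iteratedDeriv 3 g 0) + β₈ x * (yf''' - iteratedDeriv 3 g 1)
    y 0 = yi ∧ y 1 = yf ∧
    deriv y 0 = yi' ∧ deriv y 1 = yf' ∧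
    iteratedDeriv 2 y 0 = yi'' ∧ iteratedDeriv 2 y 1 = yf'' ∧
    iteratedDeriv 3 y 0 = yi''' ∧ iteratedDeriv 3 y 1 = yf''' := by
  intro β₁ β₂ β₃ β₄ β₅ β₆ β₇ β₈ y
  -- differentiability facts
  have hg7 := hg
  rw [show (7 : WithTop ℕ∞) = 6 + 1 from rfl, contDiff_succ_iff_deriv] at hg7
  have hg1 : Differentiable ℝ g := hg7.1
  have hg6 : ContDiff ℝ 6 (deriv g) := hg7.2.2
  rw [show (6 : WithTop ℕ∞) = 5 + 1 from rfl, contDiff_succ_iff_deriv] at hg6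
  have hg2 : Differentiable ℝ (deriv g) := hg6.1
  have hg5 : ContDiff ℝ 5 (deriv (deriv g)) := hg6.2.2
  rw [show (5 : WithTop ℕ∞) = 4 + 1 from rfl, contDiff_succ_iff_deriv] at hg5
  have hg3 : Differentiable ℝ (deriv (deriv g)) := hg5.1
  have e2g : iteratedDeriv 2 g = deriv (deriv g) := by
    rw [show (2 : ℕ) = 1 + 1 from rfl, iteratedDeriv_succ, iteratedDeriv_one]
  have e3g : iteratedDeriv 3 g = deriv (deriv (deriv g)) := by
    rw [show (3 : ℕ) = 2 + 1 from rfl, iteratedDeriv_succ, e2g]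
  -- constants
  set c1 : ℝ := yi - g 0 with hc1
  set c2 : ℝ := yf - g 1 with hc2
  set c3 : ℝ := yi' - deriv g 0 with hc3
  set c4 : ℝ := yf' - deriv g 1 with hc4
  set c5 : ℝ := yi'' - iteratedDeriv 2 g 0 with hc5
  set c6 : ℝ := yf'' - iteratedDeriv 2 g 1 with hc6
  set c7 : ℝ := yi''' - iteratedDeriv 3 g 0 with hc7
  set c8 : ℝ := yf''' - iteratedDeriv 3 g 1 with hc8
  set A0 : ℝ := c1 with hA0
  set A1 : ℝ := c3 with hA1
  set A2 : ℝ := c5/2 with hA2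
  set A3 : ℝ := c7/6 with hA3
  set A4 : ℝ := -35*c1 + 35*c2 - 20*c3 - 15*c4 - 5*c5 + (5/2)*c6 - (2/3)*c7 - (1/6)*c8 with hA4
  set A5 : ℝ := 84*c1 - 84*c2 + 45*c3 + 39*c4 + 10*c5 - 7*c6 + c7 + (1/2)*c8 with hA5
  set A6 : ℝ := -70*c1 + 70*c2 - 36*c3 - 34*c4 - (15/2)*c5 + (13/2)*c6 - (2/3)*c7 - (1/2)*c8 with hA6
  set A7 : ℝ := 20*c1 - 20*c2 + 10*c3 + 10*c4 + 2*c5 - 2*c6 + (1/6)*c7 + (1/6)*c8 with hA7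
  have hyQ : y = fun x : ℝ =>
      g x + (A0 + A1*x + A2*x^2 + A3*x^3 + A4*x^4 + A5*x^5 + A6*x^6 + A7*x^7) := by
    funext x
    simp only [y, β₁, β₂, β₃, β₄, β₅, β₆, β₇, β₈, hA0, hA1, hA2, hA3, hA4, hA5, hA6, hA7]
    ring
  have hdy : deriv y = fun x : ℝ =>
      deriv g x + (A1 + 2*A2*x + 3*A3*x^2 + 4*A4*x^3 + 5*A5*x^4 + 6*A6*x^5 + 7*A7*x^6) := by
    funext x
    rw [hyQ]
    exact ((hg1 x).hasDerivAt.add (tfc_poly7 A0 A1 A2 A3 A4 A5 A6 A7 x)).deriv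
  have hddy : deriv (deriv y) = fun x : ℝ =>
      deriv (deriv g) x + (2*A2 + 2*(3*A3)*x + 3*(4*A4)*x^2 + 4*(5*A5)*x^3 + 5*(6*A6)*x^4
        + 6*(7*A7)*x^5) := by
    funext x
    rw [hdy]
    exact ((hg2 x).hasDerivAt.add
      (tfc_poly6 A1 (2*A2) (3*A3) (4*A4) (5*A5) (6*A6) (7*A7) x)).deriv
  have hdddy : deriv (deriv (deriv y)) = fun x : ℝ =>
      deriv (deriv (deriv g)) x + (2*(3*A3) + 2*(3*(4*A4))*x + 3*(4*(5*A5))*x^2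
        + 4*(5*(6*A6))*x^3 + 5*(6*(7*A7))*x^4) := by
    funext x
    rw [hddy]
    exact ((hg3 x).hasDerivAt.add
      (tfc_poly5 (2*A2) (2*(3*A3)) (3*(4*A4)) (4*(5*A5)) (5*(6*A6)) (6*(7*A7)) x)).deriv
  have e2y : iteratedDeriv 2 y = deriv (deriv y) := by
    rw [show (2 : ℕ) = 1 + 1 from rfl, iteratedDeriv_succ, iteratedDeriv_one]
  have e3y : iteratedDeriv 3 y = deriv (deriv (deriv y)) := by
    rw [show (3 : ℕ) = 2 + 1 from rfl, iteratedDeriv_succ, e2y]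
  refine ⟨?_, ?_, ?_, ?_, ?_, ?_, ?_, ?_⟩
  · rw [hyQ]
    simp only [hA0, hA1, hA2, hA3, hA4, hA5, hA6, hA7, hc1, hc2, hc3, hc4, hc5, hc6, hc7, hc8]
    ring
  · rw [hyQ]
    simp only [hA0, hA1, hA2, hA3, hA4, hA5, hA6, hA7, hc1, hc2, hc3, hc4, hc5, hc6, hc7, hc8]
    ring
  · rw [hdy]
    simp only [hA0, hA1, hA2, hA3, hA4, hA5, hA6, hA7, hc1, hc2, hc3, hc4, hc5, hc6, hc7, hc8]
    ring
  · rw [hdy]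
    simp only [hA0, hA1, hA2, hA3, hA4, hA5, hA6, hA7, hc1, hc2, hc3, hc4, hc5, hc6, hc7, hc8]
    ring
  · rw [e2y, hddy, ← e2g]
    simp only [hA0, hA1, hA2, hA3, hA4, hA5, hA6, hA7, hc1, hc2, hc3, hc4, hc5, hc6, hc7, hc8]
    ring
  · rw [e2y, hddy, ← e2g]
    simp only [hA0, hA1, hA2, hA3, hA4, hA5, hA6, hA7, hc1, hc2, hc3, hc4, hc5, hc6, hc7, hc8]
    ring
  · rw [e3y, hdddy, ← e3g]
    simp only [hA0, hA1, hA2, hA3, hA4, hA5, hA6, hA7, hc1, hc2, hc3, hc4, hc5, hc6, hc7, hc8]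
    ring
  · rw [e3y, hdddy, ← e3g]
    simp only [hA0, hA1, hA2, hA3, hA4, hA5, hA6, hA7, hc1, hc2, hc3, hc4, hc5, hc6, hc7, hc8]
    ring
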